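/- If G has at most two maximum independent sets and diadem(G) = corona(G), then G is a König-Egerváry graph, i.e., α(G) + μ(G) = |V(G)|. -/

import Mathlib

open Set

variable {V : Type*}

/-- `S` is an independent set of `G`. -/
def IndepSet (G : SimpleGraph V) (S : Set V) : Prop :=
  ∀ x ∈ S, ∀ y ∈ S, ¬ G.Adj x y

/-- The independence number `α(G)`. -/
noncomputable def alpha (G : SimpleGraph V) : ℕ :=
  sSup {n | ∃ S : Set V, IndepSet G S ∧ S.ncard = n}

/-- `S` is a maximum independent set of `G`. -/
def MaxIndep (G : SimpleGraph V) (S : Set V) : Prop :=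
  IndepSet G S ∧ S.ncard = alpha G

/-- `Ω(G)`, the family of all maximum independent sets. -/
def Omega (G : SimpleGraph V) : Set (Set V) := {S | MaxIndep G S}

/-- `core(G)`, the intersection of all maximum independent sets. -/
def core (G : SimpleGraph V) : Set V := ⋂₀ Omega G

/-- `corona(G)`, the union of all maximum independent sets. -/
def corona (G : SimpleGraph V) : Set V := ⋃₀ Omega G

/-- The matching number `μ(G)`. -/
noncomputable def matchNum (G : SimpleGraph V) : ℕ :=
  sSup {n | ∃ M : G.Subgraph, M.IsMatching ∧ M.edgeSet.ncard = n}

/-- A matching from `X` into `Y`: an injection `f` on `X` into `Y` such that each `x ∈ X`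
is adjacent to `f x` and the edges `{x, f x}` are pairwise disjoint. -/
def MatchingFrom (G : SimpleGraph V) (X Y : Set V) : Prop :=
  ∃ f : V → V, Set.InjOn f X ∧ (∀ x ∈ X, f x ∈ Y ∧ G.Adj x (f x)) ∧
    ∀ x ∈ X, ∀ y ∈ X, x ≠ y → f x ≠ y

/-- The neighborhood `N(X)` of a set of vertices. -/
def nbhd (G : SimpleGraph V) (X : Set V) : Set V := {v | ∃ x ∈ X, G.Adj x v}

/-- The difference `d(X) = |X| - |N(X)|`. -/
noncomputable def diffd (G : SimpleGraph V) (X : Set V) : ℤ :=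
  (X.ncard : ℤ) - ((nbhd G X).ncard : ℤ)

/-- A critical independent set. -/
def CritIndep (G : SimpleGraph V) (A : Set V) : Prop :=
  IndepSet G A ∧ ∀ I : Set V, IndepSet G I → diffd G I ≤ diffd G A

/-- A maximum(-cardinality) critical independent set. -/
def MaxCritIndep (G : SimpleGraph V) (A : Set V) : Prop :=
  CritIndep G A ∧ ∀ B : Set V, CritIndep G B → B.ncard ≤ A.ncard

/-- `nucleus(G)`, the intersection of all maximum critical independent sets. -/
def nucleus (G : SimpleGraph V) : Set V := ⋂₀ {A | MaxCritIndep G A}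

/-- `diadem(G)`, the union of all maximum critical independent sets. -/
def diadem (G : SimpleGraph V) : Set V := ⋃₀ {A | MaxCritIndep G A}

/-! ### Auxiliary lemmas -/

section Aux

lemma aux_ncard_diff_add_ncard_inter [Finite V] (s t : Set V) :
    (s \ t).ncard + (s ∩ t).ncard = s.ncard := by
  have hd : Disjoint (s \ t) (s ∩ t) := by
    apply Set.disjoint_left.mpr
    rintro x ⟨-, hxt⟩ ⟨-, hxt'⟩
    exact hxt hxt'
  rw [← Set.ncard_union_eq hd (Set.toFinite _) (Set.toFinite _), Set.diff_union_inter]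

variable (G : SimpleGraph V)

lemma aux_nbhd_mono {X Y : Set V} (h : X ⊆ Y) : nbhd G X ⊆ nbhd G Y := by
  rintro v ⟨x, hx, hadj⟩; exact ⟨x, h hx, hadj⟩

lemma aux_nbhd_union (X Y : Set V) : nbhd G (X ∪ Y) = nbhd G X ∪ nbhd G Y := by
  ext v
  constructor
  · rintro ⟨x, hx | hx, hadj⟩
    exacts [Or.inl ⟨x, hx, hadj⟩, Or.inr ⟨x, hx, hadj⟩]
  · rintro (⟨x, hx, hadj⟩ | ⟨x, hx, hadj⟩)
    exacts [⟨x, Or.inl hx, hadj⟩, ⟨x, Or.inr hx, hadj⟩]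

lemma aux_nbhd_inter (X Y : Set V) : nbhd G (X ∩ Y) ⊆ nbhd G X ∩ nbhd G Y := by
  rintro v ⟨x, hx, hadj⟩; exact ⟨⟨x, hx.1, hadj⟩, ⟨x, hx.2, hadj⟩⟩

/-- members of an independent set are not neighbors of it -/
lemma aux_indep_disjoint_nbhd {S : Set V} (hS : IndepSet G S) : S ∩ nbhd G S = ∅ := by
  ext v
  simp only [Set.mem_inter_iff, Set.mem_empty_iff_false, iff_false, not_and]
  rintro hv ⟨x, hx, hadj⟩
  exact hS x hx v hv hadj

end Aux

section Fin

variable [Fintype V] (G : SimpleGraph V)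

lemma aux_bddAbove_indep : BddAbove {n | ∃ S : Set V, IndepSet G S ∧ S.ncard = n} := by
  refine ⟨Fintype.card V, ?_⟩
  rintro n ⟨S, -, rfl⟩
  simpa [Set.ncard_univ, Nat.card_eq_fintype_card] using
    Set.ncard_le_ncard (Set.subset_univ S) (Set.toFinite _)

lemma aux_exists_maxIndep : ∃ S : Set V, MaxIndep G S := by
  have hne : {n | ∃ S : Set V, IndepSet G S ∧ S.ncard = n}.Nonempty :=
    ⟨0, ∅, by intro x hx; exact absurd hx (Set.notMem_empty x), by simp⟩
  have := Nat.sSup_mem hne (aux_bddAbove_indep G)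
  obtain ⟨S, hS, hc⟩ := this
  exact ⟨S, hS, hc⟩

lemma aux_ncard_le_alpha {S : Set V} (hS : IndepSet G S) : S.ncard ≤ alpha G :=
  le_csSup (aux_bddAbove_indep G) ⟨S, hS, rfl⟩

/-- maximum independent sets are maximal: every outside vertex has a neighbor inside -/
lemma aux_maxIndep_nbhd {S : Set V} (hS : MaxIndep G S) : nbhd G S = Sᶜ := by
  ext v
  simp only [Set.mem_compl_iff]
  constructor
  · rintro ⟨x, hx, hadj⟩ hv
    exact hS.1 x hx v hv hadj
  · intro hv
    by_contra hnb
    have hindep : IndepSet G (insert v S) := by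
      intro x hx y hy hadj
      rcases hx with rfl | hx
      · rcases hy with rfl | hy
        · exact G.irrefl hadj
        · exact hnb ⟨y, hy, hadj.symm⟩
      · rcases hy with rfl | hy
        · exact hnb ⟨x, hx, hadj⟩
        · exact hS.1 x hx y hy hadj
    have : (insert v S).ncard ≤ alpha G := aux_ncard_le_alpha G hindep
    rw [Set.ncard_insert_of_notMem hv (Set.toFinite _), hS.2] at this
    omega

end Fin

section Crit

variable [Fintype V] (G : SimpleGraph V)

/-- For any set `X`, the independent set `X \ N(X)` has at least as large a difference. -/
lemma aux_strip (X : Set V) :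
    IndepSet G (X \ nbhd G X) ∧ diffd G X ≤ diffd G (X \ nbhd G X) := by
  set I := X \ nbhd G X with hI
  have hIindep : IndepSet G I := by
    intro x hx y hy hadj
    exact hy.2 ⟨x, hx.1, hadj⟩
  refine ⟨hIindep, ?_⟩
  -- |I| = |X| - |X ∩ N(X)|
  have h1 : I.ncard + (X ∩ nbhd G X).ncard = X.ncard := aux_ncard_diff_add_ncard_inter _ _
  -- N(I) ⊆ N(X) \ X
  have h2 : nbhd G I ⊆ nbhd G X \ X := by
    rintro v ⟨u, hu, hadj⟩
    refine ⟨⟨u, hu.1, hadj⟩, fun hvX => ?_⟩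
    exact hu.2 ⟨v, hvX, hadj.symm⟩
  have h3 : (nbhd G I).ncard ≤ (nbhd G X \ X).ncard :=
    Set.ncard_le_ncard h2 (Set.toFinite _)
  have h4 : (nbhd G X \ X).ncard + (nbhd G X ∩ X).ncard = (nbhd G X).ncard :=
    aux_ncard_diff_add_ncard_inter _ _
  have h5 : (nbhd G X ∩ X).ncard = (X ∩ nbhd G X).ncard := by rw [Set.inter_comm]
  unfold diffd
  omega

/-- the difference of an arbitrary set is at most that of a critical independent set -/
lemma aux_diffd_le_crit {A : Set V} (hA : CritIndep G A) (X : Set V) :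
    diffd G X ≤ diffd G A := by
  obtain ⟨hInd, hle⟩ := aux_strip G X
  exact hle.trans (hA.2 _ hInd)

lemma aux_exists_critIndep : ∃ A : Set V, CritIndep G A := by
  obtain ⟨A, hA, hmax⟩ := Set.exists_max_image {I : Set V | IndepSet G I} (diffd G)
    (Set.toFinite _) ⟨∅, fun x hx => absurd hx (Set.notMem_empty x)⟩
  exact ⟨A, hA, fun I hI => hmax I hI⟩

lemma aux_exists_maxCritIndep : ∃ A : Set V, MaxCritIndep G A := by
  obtain ⟨A₀, hA₀⟩ := aux_exists_critIndep G
  obtain ⟨A, hA, hmax⟩ := Set.exists_max_image {B : Set V | CritIndep G B}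
    (fun B => B.ncard) (Set.toFinite _) ⟨A₀, hA₀⟩
  exact ⟨A, hA, fun B hB => hmax B hB⟩

/-- The union of two sets achieving the maximal difference also achieves it. -/
lemma aux_union_crit {A : Set V} (hA : CritIndep G A) {X Y : Set V}
    (hX : diffd G X = diffd G A) (hY : diffd G Y = diffd G A) :
    diffd G (X ∪ Y) = diffd G A := by
  have hsup : diffd G X + diffd G Y ≤ diffd G (X ∪ Y) + diffd G (X ∩ Y) := by
    have e1 : (X ∪ Y).ncard + (X ∩ Y).ncard = X.ncard + Y.ncard :=
      Set.ncard_union_add_ncard_inter _ _ (Set.toFinite _) (Set.toFinite _)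
    have e2 : nbhd G (X ∪ Y) = nbhd G X ∪ nbhd G Y := aux_nbhd_union G X Y
    have e3 : (nbhd G X ∪ nbhd G Y).ncard + (nbhd G X ∩ nbhd G Y).ncard
        = (nbhd G X).ncard + (nbhd G Y).ncard :=
      Set.ncard_union_add_ncard_inter _ _ (Set.toFinite _) (Set.toFinite _)
    have e4 : (nbhd G (X ∩ Y)).ncard ≤ (nbhd G X ∩ nbhd G Y).ncard :=
      Set.ncard_le_ncard (aux_nbhd_inter G X Y) (Set.toFinite _)
    unfold diffd
    rw [e2]
    omega
  have hXY : diffd G (X ∪ Y) ≤ diffd G A := aux_diffd_le_crit G hA _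
  have hXiY : diffd G (X ∩ Y) ≤ diffd G A := aux_diffd_le_crit G hA _
  omega

/-- The union of a nonempty finite family of maximal-difference sets has maximal difference. -/
lemma aux_sUnion_crit {A : Set V} (hA : CritIndep G A) (F : Set (Set V))
    (hF : ∀ X ∈ F, diffd G X = diffd G A) (hne : F.Nonempty) :
    diffd G (⋃₀ F) = diffd G A := by
  have hfin : F.Finite := Set.toFinite _
  revert hF hne
  refine Set.Finite.induction_on (motive := fun F _ =>
    (∀ X ∈ F, diffd G X = diffd G A) → F.Nonempty → diffd G (⋃₀ F) = diffd G A) F hfin ?_ ?_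
  · intro _ hne; exact absurd hne (by simp)
  · intro X F' hXF' hF'fin ih hF hne
    rw [Set.sUnion_insert]
    rcases Set.eq_empty_or_nonempty F' with rfl | hne'
    · simpa using hF X (by simp)
    · have h1 : diffd G X = diffd G A := hF X (by simp)
      have h2 : diffd G (⋃₀ F') = diffd G A :=
        ih (fun Y hY => hF Y (Set.mem_insert_of_mem _ hY)) hne'
      exact aux_union_crit G hA h1 h2

end Crit

section Corona

variable [Fintype V] (G : SimpleGraph V)

/-- With at most two maximum independent sets, `Ω` is covered by two of its members. -/
lemma aux_omega_two (hΩ : (Omega G).ncard ≤ 2) :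
    ∃ S₁ S₂ : Set V, S₁ ∈ Omega G ∧ S₂ ∈ Omega G ∧ Omega G = {S₁, S₂} := by
  obtain ⟨S₁, hS₁⟩ := aux_exists_maxIndep G
  by_cases hsub : Omega G ⊆ {S₁}
  · exact ⟨S₁, S₁, hS₁, hS₁, by
      apply Set.Subset.antisymm
      · intro X hX; rcases hsub hX with rfl; simp
      · rintro X hX
        simp only [Set.mem_insert_iff, Set.mem_singleton_iff] at hX
        rcases hX with rfl | rfl <;> exact hS₁⟩
  · rw [Set.not_subset] at hsub
    obtain ⟨S₂, hS₂, hne⟩ := hsub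
    simp only [Set.mem_singleton_iff] at hne
    refine ⟨S₁, S₂, hS₁, hS₂, ?_⟩
    apply Set.Subset.antisymm
    · intro S₃ hS₃
      by_contra hS₃ne
      simp only [Set.mem_insert_iff, Set.mem_singleton_iff, not_or] at hS₃ne
      have hsub3 : ({S₁, S₂, S₃} : Set (Set V)) ⊆ Omega G := by
        rintro X hX
        simp only [Set.mem_insert_iff, Set.mem_singleton_iff] at hX
        rcases hX with rfl | rfl | rfl <;> assumption
      have hcard : ({S₁, S₂, S₃} : Set (Set V)).ncard = 3 := by
        have d1 : S₁ ≠ S₂ := fun e => hne e.symm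
        have d2 : S₂ ≠ S₃ := fun e => hS₃ne.2 e.symm
        have d3 : S₁ ≠ S₃ := fun e => hS₃ne.1 e.symm
        rw [Set.ncard_insert_of_notMem (by simp [d1, d3]) (Set.toFinite _),
          Set.ncard_pair d2]
      have := Set.ncard_le_ncard hsub3 (Set.toFinite _)
      omega
    · rintro X hX
      simp only [Set.mem_insert_iff, Set.mem_singleton_iff] at hX
      rcases hX with rfl | rfl <;> assumption

lemma aux_corona_eq {S₁ S₂ : Set V} (h12 : Omega G = {S₁, S₂}) :
    corona G = S₁ ∪ S₂ := by
  unfold corona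
  rw [h12]
  simp [Set.sUnion_insert]

lemma aux_nbhd_corona {S₁ S₂ : Set V} (h1 : MaxIndep G S₁) (h2 : MaxIndep G S₂) :
    nbhd G (S₁ ∪ S₂) = (S₁ ∩ S₂)ᶜ := by
  rw [aux_nbhd_union, aux_maxIndep_nbhd G h1, aux_maxIndep_nbhd G h2, ← Set.compl_inter]

/-- `diffd` of the union of two maximum independent sets equals `2α - n`. -/
lemma aux_diffd_corona {S₁ S₂ : Set V} (h1 : MaxIndep G S₁) (h2 : MaxIndep G S₂) :
    diffd G (S₁ ∪ S₂) = 2 * (alpha G : ℤ) - (Fintype.card V : ℤ) := by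
  have e1 : (S₁ ∪ S₂).ncard + (S₁ ∩ S₂).ncard = S₁.ncard + S₂.ncard :=
    Set.ncard_union_add_ncard_inter _ _ (Set.toFinite _) (Set.toFinite _)
  have e2 : (S₁ ∩ S₂).ncard + ((S₁ ∩ S₂)ᶜ).ncard = Fintype.card V := by
    rw [Set.ncard_add_ncard_compl _ (Set.toFinite _) (Set.toFinite _),
      Nat.card_eq_fintype_card]
  unfold diffd
  rw [aux_nbhd_corona G h1 h2, h1.2, h2.2] at *
  omega

/-- `diffd` of a maximum independent set equals `2α - n`. -/
lemma aux_diffd_maxIndep {S : Set V} (hS : MaxIndep G S) :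
    diffd G S = 2 * (alpha G : ℤ) - (Fintype.card V : ℤ) := by
  have e2 : S.ncard + (Sᶜ).ncard = Fintype.card V := by
    rw [Set.ncard_add_ncard_compl _ (Set.toFinite _) (Set.toFinite _),
      Nat.card_eq_fintype_card]
  unfold diffd
  rw [aux_maxIndep_nbhd G hS, hS.2] at *
  omega

/-- Main structural step : under the hypotheses, every maximum independent set is critical. -/
lemma aux_maxIndep_crit (hΩ : (Omega G).ncard ≤ 2) (h : diadem G = corona G)
    {S : Set V} (hS : MaxIndep G S) : CritIndep G S := by
  obtain ⟨A₀, hA₀⟩ := aux_exists_maxCritIndep G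
  -- diadem is a maximal-difference set
  have hdiadem : diffd G (diadem G) = diffd G A₀ := by
    apply aux_sUnion_crit G hA₀.1
    · intro X hX
      exact le_antisymm (hA₀.1.2 X hX.1.1) (hX.1.2 A₀ hA₀.1.1)
    · exact ⟨A₀, hA₀⟩
  -- corona has difference 2α - n
  obtain ⟨S₁, S₂, h1, h2, h12⟩ := aux_omega_two G hΩ
  have hcor : diffd G (corona G) = 2 * (alpha G : ℤ) - (Fintype.card V : ℤ) := by
    rw [aux_corona_eq G h12]
    exact aux_diffd_corona G h1 h2
  have hSd : diffd G S = diffd G A₀ := by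
    rw [aux_diffd_maxIndep G hS, ← hcor, ← h, hdiadem]
  exact ⟨hS.1, fun I hI => hSd ▸ hA₀.1.2 I hI⟩

end Corona

section Matching

variable [Fintype V] (G : SimpleGraph V)

/-- Hall condition + criticality gives an injective matching of `Sᶜ` into `S`. -/
lemma aux_hall {S : Set V} (hS : MaxIndep G S) (hcrit : CritIndep G S) :
    ∃ f : (Sᶜ : Set V) → V, Function.Injective f ∧
      ∀ i : (Sᶜ : Set V), f i ∈ S ∧ G.Adj i (f i) := by
  classical
  set t : (Sᶜ : Set V) → Finset V := fun i => Finset.univ.filter (fun v => v ∈ S ∧ G.Adj i v)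
    with ht
  have hall : ∀ s : Finset (Sᶜ : Set V), s.card ≤ (s.biUnion t).card := by
    intro s
    by_contra hlt
    push_neg at hlt
    set T : Set V := (↑(s.image (Subtype.val)) : Set V) with hT
    have hTcard : T.ncard = s.card := by
      rw [hT, Set.ncard_coe_finset, Finset.card_image_of_injective _ Subtype.val_injective]
    have hTsub : T ⊆ Sᶜ := by
      rintro v hv
      simp only [hT, Finset.coe_image, Set.mem_image] at hv
      obtain ⟨i, -, rfl⟩ := hv
      exact i.2
    -- the biUnion is S ∩ N(T)
    have hB : (↑(s.biUnion t) : Set V) = S ∩ nbhd G T := by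
      ext v
      simp only [Finset.coe_biUnion, Set.mem_iUnion, Finset.mem_coe, Finset.mem_biUnion,
        ht, Finset.mem_filter, Finset.mem_univ, true_and, Set.mem_inter_iff]
      constructor
      · rintro ⟨i, hi, hvS, hadj⟩
        refine ⟨hvS, ⟨(i : V), ?_, hadj⟩⟩
        simp only [hT, Finset.coe_image, Set.mem_image, Finset.mem_coe]
        exact ⟨i, hi, rfl⟩
      · rintro ⟨hvS, x, hx, hadj⟩
        simp only [hT, Finset.coe_image, Set.mem_image, Finset.mem_coe] at hx
        obtain ⟨i, hi, rfl⟩ := hx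
        exact ⟨i, hi, hvS, hadj⟩
    have hBcard : (S ∩ nbhd G T).ncard = (s.biUnion t).card := by
      rw [← hB, Set.ncard_coe_finset]
    -- consider I = S \ N(T)
    set I : Set V := S \ nbhd G T with hI
    have hIindep : IndepSet G I := fun x hx y hy hadj => hS.1 x hx.1 y hy.1 hadj
    have hIcard : I.ncard + (S ∩ nbhd G T).ncard = S.ncard :=
      aux_ncard_diff_add_ncard_inter _ _
    have hNIsub : nbhd G I ⊆ Sᶜ \ T := by
      rintro v ⟨u, hu, hadj⟩
      refine ⟨?_, fun hvT => hu.2 ⟨v, hvT, hadj.symm⟩⟩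
      rw [← aux_maxIndep_nbhd G hS]
      exact ⟨u, hu.1, hadj⟩
    have hNIcard : (nbhd G I).ncard ≤ (Sᶜ \ T).ncard :=
      Set.ncard_le_ncard hNIsub (Set.toFinite _)
    have hScompl : (Sᶜ \ T).ncard + T.ncard = (Sᶜ).ncard := by
      have := aux_ncard_diff_add_ncard_inter (Sᶜ) T
      rwa [Set.inter_eq_right.mpr hTsub] at this
    have hle : diffd G I ≤ diffd G S := hcrit.2 I hIindep
    have hNS : (nbhd G S).ncard = (Sᶜ).ncard := by rw [aux_maxIndep_nbhd G hS]
    unfold diffd at hle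
    rw [hNS] at hle
    omega
  obtain ⟨f, hfinj, hf⟩ := (Finset.all_card_le_biUnion_card_iff_exists_injective t).mp hall
  refine ⟨f, hfinj, fun i => ?_⟩
  have := hf i
  simp only [ht, Finset.mem_filter, Finset.mem_univ, true_and] at this
  exact this

/-- From the Hall matching, a subgraph matching with `|Sᶜ|` edges. -/
lemma aux_matchNum_ge {S : Set V} (hS : MaxIndep G S) (hcrit : CritIndep G S) :
    (Sᶜ : Set V).ncard ≤ matchNum G := by
  classical
  obtain ⟨f, hfinj, hf⟩ := aux_hall G hS hcrit
  set F : V → V := fun v => if hv : v ∈ (Sᶜ : Set V) then f ⟨v, hv⟩ else v with hF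
  have hF1 : ∀ v (hv : v ∉ S), F v ∈ S ∧ G.Adj v (F v) := by
    intro v hv
    have : F v = f ⟨v, hv⟩ := dif_pos hv
    rw [this]
    exact hf ⟨v, hv⟩
  have hF2 : ∀ u v, u ∉ S → v ∉ S → F u = F v → u = v := by
    intro u v hu hv heq
    simp only [hF] at heq
    rw [dif_pos (show u ∈ Sᶜ from hu), dif_pos (show v ∈ Sᶜ from hv)] at heq
    exact congrArg Subtype.val (hfinj heq)
  set M : G.Subgraph :=
    { verts := Sᶜ ∪ F '' Sᶜ
      Adj := fun x y => (x ∉ S ∧ y = F x) ∨ (y ∉ S ∧ x = F y)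
      adj_sub := by
        rintro x y (⟨hx, rfl⟩ | ⟨hy, rfl⟩)
        · exact (hF1 x hx).2
        · exact (hF1 y hy).2.symm
      edge_vert := by
        rintro x y (⟨hx, -⟩ | ⟨hy, rfl⟩)
        · exact Or.inl hx
        · exact Or.inr ⟨y, hy, rfl⟩
      symm := by
        constructor
        rintro x y (⟨hx, rfl⟩ | ⟨hy, rfl⟩)
        · exact Or.inr ⟨hx, rfl⟩
        · exact Or.inl ⟨hy, rfl⟩ } with hM
  have hmatch : M.IsMatching := by
    rintro v (hv | ⟨u, hu, rfl⟩)
    · refine ⟨F v, Or.inl ⟨hv, rfl⟩, ?_⟩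
      rintro w (⟨-, rfl⟩ | ⟨hw, rfl⟩)
      · rfl
      · exact absurd (hF1 w hw).1 (by simpa using hv)
    · by_cases hFu : F u ∈ S
      · refine ⟨u, Or.inr ⟨hu, rfl⟩, ?_⟩
        rintro w (⟨hFu', -⟩ | ⟨hw, heq⟩)
        · exact absurd hFu hFu'
        · exact hF2 w u hw hu heq.symm
      · -- impossible : F u ∈ S always
        exact absurd (hF1 u hu).1 hFu
  have hedge : M.edgeSet = (fun v => s(v, F v)) '' Sᶜ := by
    ext e
    induction e using Sym2.ind with
    | _ x y =>
      simp only [SimpleGraph.Subgraph.mem_edgeSet, Set.mem_image]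
      constructor
      · rintro (⟨hx, rfl⟩ | ⟨hy, rfl⟩)
        · exact ⟨x, hx, rfl⟩
        · exact ⟨y, hy, Sym2.eq_swap⟩
      · rintro ⟨v, hv, he⟩
        rw [Sym2.eq_iff] at he
        rcases he with ⟨rfl, rfl⟩ | ⟨rfl, rfl⟩
        · exact Or.inl ⟨hv, rfl⟩
        · exact Or.inr ⟨hv, rfl⟩
  have hcount : M.edgeSet.ncard = (Sᶜ : Set V).ncard := by
    rw [hedge]
    apply Set.ncard_image_of_injOn
    intro u hu v hv heq
    rw [Sym2.eq_iff] at heq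
    rcases heq with ⟨h1, -⟩ | ⟨h1, h2⟩
    · exact h1
    · exact absurd (h1 ▸ (hF1 v hv).1) hu
  have hbdd : BddAbove {n | ∃ M : G.Subgraph, M.IsMatching ∧ M.edgeSet.ncard = n} := by
    refine ⟨Nat.card (Sym2 V), ?_⟩
    rintro n ⟨M', -, rfl⟩
    simpa [Set.ncard_univ] using Set.ncard_le_ncard (Set.subset_univ M'.edgeSet) (Set.toFinite _)
  exact le_csSup hbdd ⟨M, hmatch, hcount⟩

end Matching

section Upper

variable [Fintype V] (G : SimpleGraph V)

/-- every matching has at most `|Sᶜ|` edges, for `S` independent -/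
lemma aux_matchNum_le {S : Set V} (hS : IndepSet G S) :
    matchNum G ≤ (Sᶜ : Set V).ncard := by
  classical
  have hne : {n | ∃ M : G.Subgraph, M.IsMatching ∧ M.edgeSet.ncard = n}.Nonempty := by
    refine ⟨0, ⊥, ?_, by simp [Set.ncard_eq_zero]⟩
    rintro v hv
    simp at hv
  apply csSup_le hne
  rintro n ⟨M, hM, rfl⟩
  -- each edge has an endpoint outside S ; this assignment is injective
  rcases Set.eq_empty_or_nonempty M.edgeSet with he | ⟨e₀, he₀⟩
  · simp [he]
  · have hV : Nonempty V := by
      induction e₀ using Sym2.ind with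
      | _ x y => exact ⟨x⟩
    -- key fact : for an edge e of M and v ∈ e, e = s(v, w) with M.Adj v w
    have hkey : ∀ e ∈ M.edgeSet, ∀ v ∈ e, ∃ w, M.Adj v w ∧ e = s(v, w) := by
      intro e
      induction e using Sym2.ind with
      | _ x y =>
        intro he v hv
        rw [SimpleGraph.Subgraph.mem_edgeSet] at he
        rw [Sym2.mem_iff] at hv
        rcases hv with rfl | rfl
        · exact ⟨y, he, rfl⟩
        · exact ⟨x, he.symm, Sym2.eq_swap⟩
    have hout : ∀ e ∈ M.edgeSet, ∃ v, v ∈ e ∧ v ∉ S := by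
      intro e
      induction e using Sym2.ind with
      | _ x y =>
        intro he
        rw [SimpleGraph.Subgraph.mem_edgeSet] at he
        have hadj : G.Adj x y := M.adj_sub he
        by_cases hx : x ∈ S
        · by_cases hy : y ∈ S
          · exact absurd hadj (hS x hx y hy)
          · exact ⟨y, by simp, hy⟩
        · exact ⟨x, by simp, hx⟩
    set g : Sym2 V → V := fun e =>
      if h : ∃ v, v ∈ e ∧ v ∉ S then h.choose else Classical.arbitrary V with hg
    have hgspec : ∀ e ∈ M.edgeSet, g e ∈ e ∧ g e ∉ S := by
      intro e he
      have h := hout e he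
      simp only [hg, dif_pos h]
      exact h.choose_spec
    apply Set.ncard_le_ncard_of_injOn g
    · intro e he
      exact (hgspec e he).2
    · intro e₁ h₁ e₂ h₂ heq
      obtain ⟨hv₁, -⟩ := hgspec e₁ h₁
      obtain ⟨hv₂, -⟩ := hgspec e₂ h₂
      rw [heq] at hv₁
      set v := g e₂
      obtain ⟨w₁, hw₁, he₁⟩ := hkey e₁ h₁ v hv₁
      obtain ⟨w₂, hw₂, he₂⟩ := hkey e₂ h₂ v hv₂
      have hvert : v ∈ M.verts := M.edge_vert hw₁
      obtain ⟨w, -, huniq⟩ := hM hvert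
      rw [he₁, he₂, huniq w₁ hw₁, huniq w₂ hw₂]

end Upper

theorem stmt_9 [Fintype V] (G : SimpleGraph V)
    (hΩ : (Omega G).ncard ≤ 2) (h : diadem G = corona G) :
    alpha G + matchNum G = Fintype.card V := by
  obtain ⟨S, hS⟩ := aux_exists_maxIndep G
  have hcrit : CritIndep G S := aux_maxIndep_crit G hΩ h hS
  have h1 : (Sᶜ : Set V).ncard ≤ matchNum G := aux_matchNum_ge G hS hcrit
  have h2 : matchNum G ≤ (Sᶜ : Set V).ncard := aux_matchNum_le G hS.1
  have h3 : S.ncard + (Sᶜ).ncard = Fintype.card V := by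
    rw [Set.ncard_add_ncard_compl _ (Set.toFinite _) (Set.toFinite _),
      Nat.card_eq_fintype_card]
  rw [← hS.2]
  omega
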